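/- arXiv:2503.14619 — 2 statements merged into one kernel-verified Lean document; each statement's English description precedes it below -/
import Mathlib

section
/- Let λ_1, ..., λ_K ∈ [0, 1-c] for some constant c ∈ (0,1), and let a_ℓ denote the coefficient of z^ℓ in the power series of f(z) = (1/(1-z)) · ∏_{k=1}^{K} 1/(1 - z λ_k²). Then for any r with 1 < r < 1/(1-c)², one has |a_ℓ − ∏_{k=1}^{K} 1/(1 - λ_k²)| ≤ (1/(r^ℓ (r-1))) · ∏_{k=1}^{K} 1/(1 - r λ_k²) for every ℓ ≥ 0. -/
open scoped BigOperators

open Finset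

namespace CRB

variable {K : ℕ}

/-- coefficient formula for a product of geometric series -/
lemma coeffP (y : Fin K → ℝ) (j : ℕ) :
    PowerSeries.coeff (R := ℝ) j (∏ k : Fin K, PowerSeries.mk fun n => y k ^ n)
      = ∑ m ∈ finsuppAntidiag (univ : Finset (Fin K)) j, ∏ k : Fin K, y k ^ m k := by
  rw [PowerSeries.coeff_prod]
  simp [PowerSeries.coeff_mk]

lemma b_nonneg {y : Fin K → ℝ} (hy : ∀ k, 0 ≤ y k) (j : ℕ) :
    0 ≤ PowerSeries.coeff (R := ℝ) j (∏ k : Fin K, PowerSeries.mk fun n => y k ^ n) := by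
  rw [coeffP]
  exact Finset.sum_nonneg fun m _ => Finset.prod_nonneg fun k _ => pow_nonneg (hy k) _

lemma b_scale (r : ℝ) (y : Fin K → ℝ) (j : ℕ) :
    PowerSeries.coeff (R := ℝ) j (∏ k : Fin K, PowerSeries.mk fun n => (r * y k) ^ n)
      = r ^ j * PowerSeries.coeff (R := ℝ) j (∏ k : Fin K, PowerSeries.mk fun n => y k ^ n) := by
  rw [coeffP, coeffP, Finset.mul_sum]
  refine Finset.sum_congr rfl fun m hm => ?_
  have hsum : ∑ k : Fin K, m k = j := (Finset.mem_finsuppAntidiag.1 hm).1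
  calc ∏ k : Fin K, (r * y k) ^ m k = ∏ k : Fin K, r ^ m k * y k ^ m k := by
        simp [mul_pow]
    _ = (∏ k : Fin K, r ^ m k) * ∏ k : Fin K, y k ^ m k := Finset.prod_mul_distrib
    _ = r ^ j * ∏ k : Fin K, y k ^ m k := by rw [Finset.prod_pow_eq_pow_sum, hsum]

lemma partial_eq_boxsum (y : Fin K → ℝ) (N : ℕ) :
    ∑ j ∈ range (N + 1),
        PowerSeries.coeff (R := ℝ) j (∏ k : Fin K, PowerSeries.mk fun n => y k ^ n)
      = ∑ m ∈ (range (N + 1)).biUnion (fun j => finsuppAntidiag (univ : Finset (Fin K)) j),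
          ∏ k : Fin K, y k ^ m k := by
  rw [Finset.sum_biUnion]
  · exact Finset.sum_congr rfl fun j _ => coeffP y j
  · intro j₁ h₁ j₂ h₂ hne
    simp only [Finset.disjoint_left]
    intro m hm₁ hm₂
    exact hne ((Finset.mem_finsuppAntidiag.1 hm₁).1.symm.trans (Finset.mem_finsuppAntidiag.1 hm₂).1)

lemma partial_le_prod {y : Fin K → ℝ} (hy0 : ∀ k, 0 ≤ y k) (hy1 : ∀ k, y k < 1) (N : ℕ) :
    ∑ j ∈ range (N + 1),
        PowerSeries.coeff (R := ℝ) j (∏ k : Fin K, PowerSeries.mk fun n => y k ^ n)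
      ≤ ∏ k : Fin K, 1 / (1 - y k) := by
  rw [partial_eq_boxsum]
  have h1 : ∑ m ∈ (range (N + 1)).biUnion (fun j => finsuppAntidiag (univ : Finset (Fin K)) j),
        ∏ k : Fin K, y k ^ m k
      ≤ ∑ g ∈ Fintype.piFinset (fun _ : Fin K => range (N + 1)), ∏ k : Fin K, y k ^ g k := by
    have himg := Finset.sum_image (s := (range (N + 1)).biUnion
        (fun j => finsuppAntidiag (univ : Finset (Fin K)) j))
      (f := fun (g : Fin K → ℕ) => ∏ k : Fin K, y k ^ g k)
      (g := fun (m : Fin K →₀ ℕ) => (m : Fin K → ℕ))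
      (fun m _ m' _ h => DFunLike.coe_injective h)
    rw [show (∑ m ∈ (range (N + 1)).biUnion (fun j => finsuppAntidiag (univ : Finset (Fin K)) j),
        ∏ k : Fin K, y k ^ m k) = _ from himg.symm]
    apply Finset.sum_le_sum_of_subset_of_nonneg
    · intro g hg
      simp only [Finset.mem_image] at hg
      obtain ⟨m, hm, rfl⟩ := hg
      simp only [Finset.mem_biUnion, Finset.mem_range] at hm
      obtain ⟨j, hj, hm⟩ := hm
      have hsum : ∑ k : Fin K, m k = j := (Finset.mem_finsuppAntidiag.1 hm).1
      rw [Fintype.mem_piFinset]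
      intro k
      rw [Finset.mem_range]
      calc m k ≤ ∑ k : Fin K, m k :=
            Finset.single_le_sum (fun _ _ => Nat.zero_le _) (Finset.mem_univ k)
        _ = j := hsum
        _ < N + 1 := hj
    · intro g _ _
      exact Finset.prod_nonneg fun k _ => pow_nonneg (hy0 k) _
  refine h1.trans ?_
  rw [← Finset.prod_univ_sum]
  apply Finset.prod_le_prod
  · intro k _
    exact Finset.sum_nonneg fun i _ => pow_nonneg (hy0 k) _
  · intro k _
    rw [one_div]
    exact sum_le_hasSum _ (fun i _ => pow_nonneg (hy0 k) _)
      (hasSum_geometric_of_lt_one (hy0 k) (hy1 k))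

lemma boxprod_le_partial {y : Fin K → ℝ} (hy0 : ∀ k, 0 ≤ y k) (N : ℕ) :
    ∏ k : Fin K, (∑ i ∈ range (N + 1), y k ^ i)
      ≤ ∑ j ∈ range (K * N + 1),
          PowerSeries.coeff (R := ℝ) j (∏ k : Fin K, PowerSeries.mk fun n => y k ^ n) := by
  rw [partial_eq_boxsum, Finset.prod_univ_sum]
  have himg := Finset.sum_image (s := Fintype.piFinset (fun _ : Fin K => range (N + 1)))
      (f := fun (m : Fin K →₀ ℕ) => ∏ k : Fin K, y k ^ m k)
      (g := fun (g : Fin K → ℕ) => (Finsupp.equivFunOnFinite.symm g : Fin K →₀ ℕ))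
      (fun m _ m' _ h => Finsupp.equivFunOnFinite.symm.injective h)
  rw [show (∑ g ∈ Fintype.piFinset (fun _ : Fin K => range (N + 1)),
      ∏ k : Fin K, y k ^ g k) = _ from himg.symm]
  · apply Finset.sum_le_sum_of_subset_of_nonneg
    · intro m hm
      simp only [Finset.mem_image] at hm
      obtain ⟨g, hg, rfl⟩ := hm
      rw [Fintype.mem_piFinset] at hg
      simp only [Finset.mem_biUnion, Finset.mem_range]
      refine ⟨∑ k : Fin K, g k, ?_, ?_⟩
      · have : ∀ k, g k ≤ N := fun k => Nat.lt_succ_iff.1 (Finset.mem_range.1 (hg k))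
        have hle : ∑ k : Fin K, g k ≤ K * N := by
          calc ∑ k : Fin K, g k ≤ ∑ _k : Fin K, N := Finset.sum_le_sum fun k _ => this k
            _ = K * N := by simp [Finset.sum_const, Finset.card_univ]
        exact Nat.lt_succ_of_le hle
      · rw [Finset.mem_finsuppAntidiag]
        constructor
        · simp [Finsupp.equivFunOnFinite]; rfl
        · exact Finset.subset_univ _
    · intro m _ _
      exact Finset.prod_nonneg fun k _ => pow_nonneg (hy0 k) _

end CRB

/-- Let `λ_1,…,λ_K ∈ [0, 1-c]` with `c ∈ (0,1)`, and let `a_ℓ` be the coefficient of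
`z^ℓ` in the power series of `f(z) = (1/(1-z)) ∏_k 1/(1 - z λ_k²)`. Then for any
`1 < r < 1/(1-c)²` and every `ℓ`,
`|a_ℓ - ∏_k 1/(1-λ_k²)| ≤ (1/(r^ℓ (r-1))) ∏_k 1/(1 - r λ_k²)`. -/
theorem coeff_residue_bound (K : ℕ) (c : ℝ) (hc : 0 < c ∧ c < 1)
    (lam : Fin K → ℝ) (hlam : ∀ k, 0 ≤ lam k ∧ lam k ≤ 1 - c)
    (r : ℝ) (hr1 : 1 < r) (hr2 : r < 1 / (1 - c) ^ 2) (ℓ : ℕ) :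
    |PowerSeries.coeff (R := ℝ) ℓ
        ((PowerSeries.mk fun _ => (1 : ℝ)) *
          ∏ k : Fin K, PowerSeries.mk fun n => (lam k ^ 2) ^ n)
      - ∏ k : Fin K, 1 / (1 - lam k ^ 2)|
      ≤ (1 / (r ^ ℓ * (r - 1))) * ∏ k : Fin K, 1 / (1 - r * lam k ^ 2) := by
  obtain ⟨hc0, hc1⟩ := hc
  have h1c : 0 < 1 - c := by linarith
  set x : Fin K → ℝ := fun k => lam k ^ 2 with hxdef
  have hx0 : ∀ k, 0 ≤ x k := fun k => sq_nonneg _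
  have hxle : ∀ k, x k ≤ (1 - c) ^ 2 := fun k =>
    pow_le_pow_left₀ (hlam k).1 (hlam k).2 2
  have h1c2 : (0:ℝ) < (1 - c) ^ 2 := pow_pos h1c 2
  have h1c2lt : (1 - c) ^ 2 < 1 := pow_lt_one₀ h1c.le (by linarith) two_ne_zero
  have hx1 : ∀ k, x k < 1 := fun k => lt_of_le_of_lt (hxle k) h1c2lt
  have hr0 : (0:ℝ) < r := lt_trans one_pos hr1
  have hrx0 : ∀ k, 0 ≤ r * x k := fun k => mul_nonneg hr0.le (hx0 k)
  have hrx1 : ∀ k, r * x k < 1 := by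
    intro k
    calc r * x k ≤ r * (1 - c) ^ 2 :=
          mul_le_mul_of_nonneg_left (hxle k) hr0.le
      _ < (1 / (1 - c) ^ 2) * (1 - c) ^ 2 :=
          mul_lt_mul_of_pos_right hr2 h1c2
      _ = 1 := by field_simp
  set b : ℕ → ℝ := fun j =>
    PowerSeries.coeff (R := ℝ) j (∏ k : Fin K, PowerSeries.mk fun n => x k ^ n) with hbdef
  have hb0 : ∀ j, 0 ≤ b j := fun j => CRB.b_nonneg hx0 j
  set a : ℝ := PowerSeries.coeff (R := ℝ) ℓ
      ((PowerSeries.mk fun _ => (1 : ℝ)) *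
        ∏ k : Fin K, PowerSeries.mk fun n => x k ^ n) with hadef
  have ha : a = ∑ j ∈ range (ℓ + 1), b j := by
    rw [hadef, PowerSeries.coeff_mul, Finset.Nat.sum_antidiagonal_eq_sum_range_succ_mk]
    rw [← Finset.sum_range_reflect (fun j => b j) (ℓ + 1)]
    refine Finset.sum_congr rfl fun j hj => ?_
    simp [hbdef, PowerSeries.coeff_mk]
  set P1 : ℝ := ∏ k : Fin K, 1 / (1 - x k) with hP1
  set P2 : ℝ := ∏ k : Fin K, 1 / (1 - r * x k) with hP2
  have hP2nn : 0 ≤ P2 :=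
    Finset.prod_nonneg fun k _ =>
      div_nonneg zero_le_one (by linarith [hrx1 k])
  set T : ℝ := 1 / r ^ (ℓ + 1) * P2 with hT
  have hTnn : 0 ≤ T := mul_nonneg (by positivity) hP2nn
  have haup : a ≤ P1 := by
    rw [ha]
    exact CRB.partial_le_prod hx0 hx1 ℓ
  -- key bound for all N
  have key : ∀ N, ∑ j ∈ range (N + 1), b j ≤ a + T := by
    intro N
    rcases le_or_gt N ℓ with hN | hN
    · have : ∑ j ∈ range (N + 1), b j ≤ ∑ j ∈ range (ℓ + 1), b j :=
        Finset.sum_le_sum_of_subset_of_nonneg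
          (Finset.range_subset_range.2 (by omega)) (fun j _ _ => hb0 j)
      rw [← ha] at this
      linarith
    · have hsplit : ∑ j ∈ range (N + 1), b j
          = ∑ j ∈ range (ℓ + 1), b j + ∑ j ∈ Finset.Ico (ℓ + 1) (N + 1), b j := by
        rw [Finset.range_eq_Ico, Finset.range_eq_Ico]
        exact (Finset.sum_Ico_consecutive b (n := ℓ + 1) (k := N + 1) (Nat.zero_le _) (by omega)).symm
      have htail : ∑ j ∈ Finset.Ico (ℓ + 1) (N + 1), b j ≤ T := by
        have step1 : ∀ j ∈ Finset.Ico (ℓ + 1) (N + 1),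
            b j ≤ 1 / r ^ (ℓ + 1) * (r ^ j * b j) := by
          intro j hj
          obtain ⟨hj1, _⟩ := Finset.mem_Ico.1 hj
          have hrj : (0:ℝ) < r ^ j := pow_pos hr0 j
          have h2 : 1 / r ^ j ≤ 1 / r ^ (ℓ + 1) :=
            one_div_le_one_div_of_le (pow_pos hr0 _) (pow_le_pow_right₀ hr1.le hj1)
          calc b j = 1 / r ^ j * (r ^ j * b j) := by field_simp
            _ ≤ 1 / r ^ (ℓ + 1) * (r ^ j * b j) :=
              mul_le_mul_of_nonneg_right h2 (mul_nonneg hrj.le (hb0 j))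
        calc ∑ j ∈ Finset.Ico (ℓ + 1) (N + 1), b j
            ≤ ∑ j ∈ Finset.Ico (ℓ + 1) (N + 1), 1 / r ^ (ℓ + 1) * (r ^ j * b j) :=
              Finset.sum_le_sum step1
          _ = 1 / r ^ (ℓ + 1) * ∑ j ∈ Finset.Ico (ℓ + 1) (N + 1), r ^ j * b j := by
              rw [Finset.mul_sum]
          _ ≤ 1 / r ^ (ℓ + 1) * ∑ j ∈ range (N + 1), r ^ j * b j := by
              apply mul_le_mul_of_nonneg_left _ (by positivity)
              apply Finset.sum_le_sum_of_subset_of_nonneg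
              · rw [Finset.range_eq_Ico]
                exact Finset.Ico_subset_Ico (Nat.zero_le _) le_rfl
              · intro j _ _
                exact mul_nonneg (pow_pos hr0 j).le (hb0 j)
          _ ≤ 1 / r ^ (ℓ + 1) * P2 := by
              apply mul_le_mul_of_nonneg_left _ (by positivity)
              have : ∑ j ∈ range (N + 1), r ^ j * b j
                  = ∑ j ∈ range (N + 1),
                      PowerSeries.coeff (R := ℝ) j
                        (∏ k : Fin K, PowerSeries.mk fun n => (r * x k) ^ n) :=
                Finset.sum_congr rfl fun j _ => (CRB.b_scale r x j).symm
              rw [this]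
              exact CRB.partial_le_prod hrx0 hrx1 N
      rw [hsplit, ← ha]
      linarith
  -- limit step
  have hlim : P1 ≤ a + T := by
    have htend : Filter.Tendsto
        (fun N => ∏ k : Fin K, ∑ i ∈ range (N + 1), x k ^ i)
        Filter.atTop (nhds P1) := by
      apply tendsto_finset_prod
      intro k _
      have hs : HasSum (fun i => x k ^ i) (1 - x k)⁻¹ :=
        hasSum_geometric_of_lt_one (hx0 k) (hx1 k)
      have := hs.tendsto_sum_nat.comp (Filter.tendsto_add_atTop_nat 1)
      simpa [one_div, Function.comp_def] using this
    apply le_of_tendsto' htend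
    intro N
    calc ∏ k : Fin K, ∑ i ∈ range (N + 1), x k ^ i
        ≤ ∑ j ∈ range (K * N + 1), b j := CRB.boxprod_le_partial hx0 N
      _ ≤ a + T := key (K * N)
  -- conclude
  have habs : |a - P1| = P1 - a := by
    rw [abs_of_nonpos (by linarith)]; ring
  have hfinal : P1 - a ≤ T := by linarith
  have hTle : T ≤ (1 / (r ^ ℓ * (r - 1))) * P2 := by
    apply mul_le_mul_of_nonneg_right _ hP2nn
    apply one_div_le_one_div_of_le
    · apply mul_pos (pow_pos hr0 ℓ); linarith
    · calc r ^ ℓ * (r - 1) ≤ r ^ ℓ * r :=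
          mul_le_mul_of_nonneg_left (by linarith) (pow_pos hr0 ℓ).le
        _ = r ^ (ℓ + 1) := by ring
  calc |a - P1| = P1 - a := habs
    _ ≤ T := hfinal
    _ ≤ (1 / (r ^ ℓ * (r - 1))) * P2 := hTle
end

section
/- Fix m ≤ n. For an injection π : [m] → [n], consider the bipartite multigraph G_π on left vertices [m] and right vertices [n] with edge set {(i,i) : i ∈ [m]} ∪ {(i, π(i)) : i ∈ [m]}. Let I ⊆ [m] be the largest subset with π(I) = I (the vertex set of the 2-core on each side), and let σ = π restricted to I. Then for any fixed subset I of size ℓ < m and any permutation σ of I, the number of injections π : [m] → [n] with 2-core support exactly I and π|_I = σ equals (n − ℓ − 1)(n − ℓ − 2)⋯(n − m); when ℓ = m this count is 1. -/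
open scoped BigOperators

/-- A subset `J ⊆ [m]` is invariant under the injection `π : [m] ↪ [n]` if
`π(J) = J` (viewing `J` as a subset of `[n]` via the canonical inclusion). -/
def InvariantUnder {m n : ℕ} (hmn : m ≤ n) (π : Fin m ↪ Fin n) (J : Finset (Fin m)) :
    Prop :=
  J.image (fun i => π i) = J.image (Fin.castLE hmn)

section Aux
open Finset
set_option linter.unusedSectionVars false

variable {α : Type*} [Fintype α] [DecidableEq α]

/-- If `f` maps a finset `J` bijectively to itself, every point of `J` returns
to itself under some positive iterate. -/
lemma exists_pos_iterate_eq (f : α → α) (J : Finset α) (hJ : J.image f = J)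
    (hinj : Set.InjOn f J) (a : α) (ha : a ∈ J) : ∃ k, 0 < k ∧ f^[k] a = a := by
  classical
  have hmem : ∀ x ∈ J, f x ∈ J := fun x hx => hJ ▸ Finset.mem_image_of_mem f hx
  let F : {x // x ∈ J} → {x // x ∈ J} := fun x => ⟨f x, hmem x x.2⟩
  have hFinj : Function.Injective F := by
    intro x y hxy
    exact Subtype.ext (hinj x.2 y.2 (congrArg Subtype.val hxy))
  have hFbij : Function.Bijective F := Finite.injective_iff_bijective.mp hFinj
  let e : Equiv.Perm {x // x ∈ J} := Equiv.ofBijective F hFbij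
  have key : ∀ (k : ℕ) (x : {x // x ∈ J}), f^[k] (x : α) = ((e ^ k) x : α) := by
    intro k
    induction k with
    | zero => intro x; simp
    | succ k ih =>
      intro x
      rw [Function.iterate_succ_apply, pow_succ]
      calc f^[k] (f (x : α)) = f^[k] ((F x : α)) := rfl
        _ = ((e ^ k) (F x) : α) := ih (F x)
        _ = ((e ^ k * e) x : α) := rfl
  refine ⟨orderOf e, orderOf_pos e, ?_⟩
  rw [key (orderOf e) ⟨a, ha⟩, pow_orderOf_eq_one]
  rfl

/-- The set of points of `s` from which iterating `g` (through `s.erase a`)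
reaches `a`. -/
noncomputable def Rset (g : α → α) (s : Finset α) (a : α) : Finset α :=
  @Finset.filter _
    (fun x => Relation.ReflTransGen (fun x y => x ∈ s.erase a ∧ g x = y) x a)
    (Classical.decPred _) s

lemma mem_Rset {g : α → α} {s : Finset α} {a x : α} :
    x ∈ Rset g s a ↔ x ∈ s ∧
      Relation.ReflTransGen (fun x y => x ∈ s.erase a ∧ g x = y) x a := by
  simp [Rset, Finset.mem_filter]

lemma a_mem_Rset {g : α → α} {s : Finset α} {a : α} (ha : a ∈ s) :
    a ∈ Rset g s a := mem_Rset.mpr ⟨ha, Relation.ReflTransGen.refl⟩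

lemma Rset_P1 {g : α → α} {s : Finset α} {a x : α} (ha : a ∈ s)
    (hx : x ∈ Rset g s a) (hxa : x ≠ a) : x ∈ s.erase a ∧ g x ∈ Rset g s a := by
  obtain ⟨hxs, hrtg⟩ := mem_Rset.mp hx
  rcases hrtg.cases_head with h | ⟨y, ⟨hxe, hgx⟩, hy⟩
  · exact absurd h hxa
  subst hgx
  refine ⟨hxe, mem_Rset.mpr ⟨?_, hy⟩⟩
  rcases hy.cases_head with h | ⟨z, ⟨hye, _⟩, _⟩
  · exact h ▸ ha
  · exact Finset.mem_of_mem_erase hye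

lemma Rset_P2 {g : α → α} {s : Finset α} {a y : α} (hy : y ∈ s.erase a)
    (hgy : g y ∈ Rset g s a) : y ∈ Rset g s a :=
  mem_Rset.mpr ⟨Finset.mem_of_mem_erase hy,
    Relation.ReflTransGen.head ⟨hy, rfl⟩ (mem_Rset.mp hgy).2⟩

/-- Claim A, direction ⟸ : if `c ∈ Rset`, then `update g a c` has a nonempty
invariant subset of `s`. -/
lemma invariant_of_mem_Rset {g : α → α} {s : Finset α} {a c : α} (ha : a ∈ s)
    (hginj : Set.InjOn g (s.erase a)) (hcimg : c ∉ (s.erase a).image g)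
    (hc : c ∈ Rset g s a) :
    ∃ J, J ⊆ s ∧ J.Nonempty ∧ J.image (Function.update g a c) = J := by
  classical
  set f := Function.update g a c with hf
  have hfinj : Set.InjOn f s := by
    intro x hx y hy hxy
    by_cases hxa : x = a <;> by_cases hya : y = a
    · rw [hxa, hya]
    · exfalso
      rw [hf] at hxy
      rw [hxa, Function.update_self, Function.update_of_ne hya] at hxy
      exact hcimg (Finset.mem_image.mpr ⟨y, Finset.mem_erase.mpr ⟨hya, hy⟩, hxy.symm⟩)
    · exfalso
      rw [hf] at hxy
      rw [hya, Function.update_self, Function.update_of_ne hxa] at hxy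
      exact hcimg (Finset.mem_image.mpr ⟨x, Finset.mem_erase.mpr ⟨hxa, hx⟩, hxy⟩)
    · rw [hf, Function.update_of_ne hxa, Function.update_of_ne hya] at hxy
      exact hginj (Finset.mem_erase.mpr ⟨hxa, hx⟩) (Finset.mem_erase.mpr ⟨hya, hy⟩) hxy
  set J := @Finset.filter _
      (fun x => Relation.ReflTransGen (fun x y => x ∈ s.erase a ∧ g x = y) c x)
      (Classical.decPred _) (Rset g s a) with hJ
  have hJR : J ⊆ Rset g s a := Finset.filter_subset _ _
  have hJs : J ⊆ s := fun x hx => (mem_Rset.mp (hJR hx)).1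
  have haJ : a ∈ J := by
    rw [hJ, Finset.mem_filter]
    exact ⟨a_mem_Rset ha, (mem_Rset.mp hc).2⟩
  have hcJ : c ∈ J := by
    rw [hJ, Finset.mem_filter]
    exact ⟨hc, Relation.ReflTransGen.refl⟩
  have himg : J.image f ⊆ J := by
    intro y hy
    obtain ⟨x, hxJ, hfx⟩ := Finset.mem_image.mp hy
    by_cases hxa : x = a
    · rw [hxa, hf, Function.update_self] at hfx
      exact hfx ▸ hcJ
    · have hx' := Finset.mem_filter.mp hxJ
      obtain ⟨hxe, hgxR⟩ := Rset_P1 ha hx'.1 hxa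
      rw [hf, Function.update_of_ne hxa] at hfx
      rw [hJ, Finset.mem_filter]
      exact hfx ▸ ⟨hgxR, hx'.2.tail ⟨hxe, rfl⟩⟩
  refine ⟨J, hJs, ⟨a, haJ⟩, Finset.eq_of_subset_of_card_le himg ?_⟩
  rw [Finset.card_image_of_injOn (hfinj.mono (by exact_mod_cast hJs))]

lemma update_injOn {g : α → α} {s : Finset α} {a c : α}
    (hginj : Set.InjOn g (s.erase a)) (hcimg : c ∉ (s.erase a).image g) :
    Set.InjOn (Function.update g a c) s := by
  intro x hx y hy hxy
  by_cases hxa : x = a <;> by_cases hya : y = a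
  · rw [hxa, hya]
  · exfalso
    rw [hxa, Function.update_self, Function.update_of_ne hya] at hxy
    exact hcimg (Finset.mem_image.mpr ⟨y, Finset.mem_erase.mpr ⟨hya, hy⟩, hxy.symm⟩)
  · exfalso
    rw [hya, Function.update_self, Function.update_of_ne hxa] at hxy
    exact hcimg (Finset.mem_image.mpr ⟨x, Finset.mem_erase.mpr ⟨hxa, hx⟩, hxy⟩)
  · rw [Function.update_of_ne hxa, Function.update_of_ne hya] at hxy
    exact hginj (Finset.mem_erase.mpr ⟨hxa, hx⟩) (Finset.mem_erase.mpr ⟨hya, hy⟩) hxy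

/-- Claim A, direction ⟹. -/
lemma mem_Rset_of_invariant {g : α → α} {s : Finset α} {a c : α} (ha : a ∈ s)
    (hginj : Set.InjOn g (s.erase a)) (hcimg : c ∉ (s.erase a).image g)
    (hgacyc : ∀ J ⊆ s.erase a, J.image g = J → J = ∅)
    {J : Finset α} (hJs : J ⊆ s) (hJne : J.Nonempty)
    (hJinv : J.image (Function.update g a c) = J) : c ∈ Rset g s a := by
  classical
  set f := Function.update g a c with hf
  have hfinj : Set.InjOn f s := update_injOn hginj hcimg
  have haJ : a ∈ J := by
    by_contra haJ
    have hJe : J ⊆ s.erase a := fun x hx =>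
      Finset.mem_erase.mpr ⟨fun h => haJ (h ▸ hx), hJs hx⟩
    have : J.image g = J := by
      have heq : J.image g = J.image f := by
        apply Finset.image_congr
        intro x hx
        exact (Function.update_of_ne (Finset.mem_erase.mp (hJe hx)).1 _ _).symm
      rw [heq, hJinv]
    exact hJne.ne_empty (hgacyc J hJe this)
  have hcJ : c ∈ J := by
    rw [← hJinv]
    refine Finset.mem_image.mpr ⟨a, haJ, ?_⟩
    rw [hf, Function.update_self]
  have hmemJ : ∀ x ∈ J, f x ∈ J := fun x hx =>
    hJinv ▸ Finset.mem_image_of_mem f hx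
  -- iterate lemma: from any x ∈ J, if f^[k] x = a then RTG x a
  have key : ∀ (k : ℕ) (x : α), x ∈ J → f^[k] x = a →
      Relation.ReflTransGen (fun x y => x ∈ s.erase a ∧ g x = y) x a := by
    intro k
    induction k with
    | zero => intro x _ h; exact h ▸ Relation.ReflTransGen.refl
    | succ k ih =>
      intro x hx h
      by_cases hxa : x = a
      · exact hxa ▸ Relation.ReflTransGen.refl
      · have hxe : x ∈ s.erase a := Finset.mem_erase.mpr ⟨hxa, hJs hx⟩
        have hfx : f x = g x := Function.update_of_ne hxa _ _
        rw [Function.iterate_succ_apply] at h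
        exact Relation.ReflTransGen.head ⟨hxe, rfl⟩
          (hfx ▸ ih (f x) (hmemJ x hx) h)
  obtain ⟨k, hk, hka⟩ := exists_pos_iterate_eq f J hJinv
    (hfinj.mono (by exact_mod_cast hJs)) a haJ
  have hfa : f a = c := by rw [hf, Function.update_self]
  obtain ⟨k', rfl⟩ := Nat.exists_eq_succ_of_ne_zero hk.ne'
  rw [Function.iterate_succ_apply, hfa] at hka
  exact mem_Rset.mpr ⟨hJs hcJ, key k' c hcJ hka⟩

/-- Claim B: the forbidden set has exactly `s.card` elements. -/
lemma card_forbidden {g : α → α} {s : Finset α} {a : α} (ha : a ∈ s)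
    (hginj : Set.InjOn g (s.erase a)) :
    ((s.erase a).image g ∪ Rset g s a).card = s.card := by
  classical
  set R := Rset g s a with hR
  have hRe_sub : R.erase a ⊆ s.erase a := by
    intro x hx
    obtain ⟨hxa, hxR⟩ := Finset.mem_erase.mp hx
    exact (Rset_P1 ha hxR hxa).1
  have himg_sub : (R.erase a).image g ⊆ R := by
    intro y hy
    obtain ⟨x, hx, rfl⟩ := Finset.mem_image.mp hy
    obtain ⟨hxa, hxR⟩ := Finset.mem_erase.mp hx
    exact (Rset_P1 ha hxR hxa).2
  have hsdiff : R \ (s.erase a).image g = R \ (R.erase a).image g := by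
    apply Finset.Subset.antisymm
    · exact Finset.sdiff_subset_sdiff (le_refl R)
        (Finset.image_subset_image hRe_sub)
    · intro x hx
      obtain ⟨hxR, hximg⟩ := Finset.mem_sdiff.mp hx
      refine Finset.mem_sdiff.mpr ⟨hxR, fun hc => hximg ?_⟩
      obtain ⟨y, hy, rfl⟩ := Finset.mem_image.mp hc
      have hyR : y ∈ R := Rset_P2 hy hxR
      exact Finset.mem_image.mpr
        ⟨y, Finset.mem_erase.mpr ⟨(Finset.mem_erase.mp hy).1, hyR⟩, rfl⟩
  have haR : a ∈ R := a_mem_Rset ha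
  have hcard1 : (R \ (R.erase a).image g).card = 1 := by
    rw [Finset.card_sdiff_of_subset himg_sub,
      Finset.card_image_of_injOn (hginj.mono (by exact_mod_cast hRe_sub)),
      Finset.card_erase_of_mem haR]
    have : 0 < R.card := Finset.card_pos.mpr ⟨a, haR⟩
    omega
  have hkey : (R \ (s.erase a).image g).card + ((s.erase a).image g).card
      = ((s.erase a).image g ∪ R).card := by
    rw [Finset.card_sdiff_add_card, Finset.union_comm]
  rw [← hkey, hsdiff, hcard1,
    Finset.card_image_of_injOn hginj, Finset.card_erase_of_mem ha]
  have : 0 < s.card := Finset.card_pos.mpr ⟨a, ha⟩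
  omega

/-- `f` is a good function for `(s, t)`: identity off `s`, injective on `s`,
mapping `s` into `t`, with no nonempty invariant subset of `s`. -/
def Good (s t : Finset α) (f : α → α) : Prop :=
  (∀ x ∉ s, f x = x) ∧ Set.InjOn f s ∧ (∀ x ∈ s, f x ∈ t) ∧
    ∀ J ⊆ s, J.image f = J → J = ∅

noncomputable def GoodSet (s t : Finset α) : Finset (α → α) :=
  @Finset.filter _ (Good s t) (Classical.decPred _) Finset.univ

lemma mem_GoodSet {s t : Finset α} {f : α → α} :
    f ∈ GoodSet s t ↔ Good s t f := by
  simp [GoodSet, Finset.mem_filter]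

theorem card_GoodSet_aux (t : Finset α) (N : ℕ) :
    ∀ s : Finset α, s ⊆ t → s.card = N →
      (GoodSet s t).card = ∏ j ∈ Finset.range N, (t.card - 1 - j) := by
  classical
  induction N with
  | zero =>
    intro s hst hcard
    rw [Finset.card_eq_zero] at hcard
    subst hcard
    rw [Finset.prod_range_zero]
    apply Finset.card_eq_one.mpr
    refine ⟨id, ?_⟩
    ext f
    simp only [Finset.mem_singleton, mem_GoodSet]
    constructor
    · rintro ⟨h1, -, -, -⟩
      funext x
      exact h1 x (Finset.notMem_empty x)
    · rintro rfl
      exact ⟨fun x _ => rfl, (by intro x hx; simp at hx), fun x hx => absurd hx (Finset.notMem_empty x),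
        fun J hJ _ => Finset.subset_empty.mp hJ⟩
  | succ k ih =>
    intro s hst hcard
    obtain ⟨a, ha⟩ := Finset.card_pos.mp (show 0 < s.card by omega)
    set s' := s.erase a with hs'
    have hs's : s' ⊆ s := Finset.erase_subset a s
    have hs't : s' ⊆ t := hs's.trans hst
    have hcard' : s'.card = k := by
      rw [hs', Finset.card_erase_of_mem ha, hcard]; rfl
    -- the projection map
    have hmaps : ∀ f ∈ GoodSet s t, Function.update f a a ∈ GoodSet s' t := by
      intro f hf
      obtain ⟨h1, h2, h3, h4⟩ := mem_GoodSet.mp hf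
      refine mem_GoodSet.mpr ⟨?_, ?_, ?_, ?_⟩
      · intro x hx
        by_cases hxa : x = a
        · rw [hxa, Function.update_self]
        · rw [Function.update_of_ne hxa]
          exact h1 x (fun hxs => hx (Finset.mem_erase.mpr ⟨hxa, hxs⟩))
      · intro x hx y hy hxy
        rw [Function.update_of_ne (Finset.mem_erase.mp hx).1,
          Function.update_of_ne (Finset.mem_erase.mp hy).1] at hxy
        exact h2 (hs's hx) (hs's hy) hxy
      · intro x hx
        rw [Function.update_of_ne (Finset.mem_erase.mp hx).1]
        exact h3 x (hs's hx)
      · intro J hJ hJinv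
        have : J.image f = J := by
          have heq : J.image (Function.update f a a) = J.image f :=
            Finset.image_congr fun x hx =>
              Function.update_of_ne (Finset.mem_erase.mp (hJ hx)).1 _ _
          rw [← heq, hJinv]
        exact h4 J (hJ.trans hs's) this
    rw [Finset.card_eq_sum_card_fiberwise hmaps]
    have hfiber : ∀ g ∈ GoodSet s' t,
        ((GoodSet s t).filter (fun f => Function.update f a a = g)).card
          = t.card - s.card := by
      intro g hg
      obtain ⟨hg1, hg2, hg3, hg4⟩ := mem_GoodSet.mp hg
      have hga : g a = a := hg1 a (Finset.notMem_erase a s)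
      set target := t \ (s'.image g ∪ Rset g s a) with htarget
      have hunion_sub : s'.image g ∪ Rset g s a ⊆ t := by
        apply Finset.union_subset
        · intro y hy
          obtain ⟨x, hx, rfl⟩ := Finset.mem_image.mp hy
          exact hg3 x hx
        · intro x hx
          exact hst (mem_Rset.mp hx).1
      have htcard : target.card = t.card - s.card := by
        rw [htarget, Finset.card_sdiff_of_subset hunion_sub, card_forbidden ha hg2]
      rw [← htcard]
      apply Finset.card_bij' (fun f _ => f a) (fun c _ => Function.update g a c)
      · -- i maps into target
        intro f hf
        simp only [Finset.mem_filter] at hf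
        obtain ⟨hfG, hfg⟩ := hf
        obtain ⟨h1, h2, h3, h4⟩ := mem_GoodSet.mp hfG
        have hfg' : ∀ x, x ≠ a → g x = f x := by
          intro x hxa
          rw [← hfg, Function.update_of_ne hxa]
        have hfa_img : f a ∉ s'.image g := by
          intro hc
          obtain ⟨y, hy, hgy⟩ := Finset.mem_image.mp hc
          have hya := (Finset.mem_erase.mp hy).1
          rw [hfg' y hya] at hgy
          exact hya (h2 (hs's hy) ha hgy)
        have hfupd : Function.update g a (f a) = f := by
          funext x
          by_cases hxa : x = a
          · rw [hxa, Function.update_self]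
          · rw [Function.update_of_ne hxa, hfg' x hxa]
        rw [htarget, Finset.mem_sdiff, Finset.mem_union]
        refine ⟨h3 a ha, ?_⟩
        rintro (hc | hc)
        · exact hfa_img hc
        · obtain ⟨J, hJs, hJne, hJinv⟩ := invariant_of_mem_Rset ha hg2 hfa_img hc
          rw [hfupd] at hJinv
          exact hJne.ne_empty (h4 J hJs hJinv)
      · -- j maps into fiber
        intro c hc
        rw [htarget, Finset.mem_sdiff, Finset.mem_union] at hc
        obtain ⟨hct, hc2⟩ := hc
        push_neg at hc2
        obtain ⟨hcimg, hcR⟩ := hc2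
        rw [Finset.mem_filter]
        constructor
        · refine mem_GoodSet.mpr ⟨?_, update_injOn hg2 hcimg, ?_, ?_⟩
          · intro x hx
            have hxa : x ≠ a := fun h => hx (h ▸ ha)
            rw [Function.update_of_ne hxa]
            exact hg1 x (fun hxs => hx (hs's hxs))
          · intro x hx
            by_cases hxa : x = a
            · rw [hxa, Function.update_self]; exact hct
            · rw [Function.update_of_ne hxa]
              exact hg3 x (Finset.mem_erase.mpr ⟨hxa, hx⟩)
          · intro J hJ hJinv
            by_contra hJne
            exact hcR (mem_Rset_of_invariant ha hg2 hcimg hg4 hJ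
              (Finset.nonempty_of_ne_empty hJne) hJinv)
        · funext x
          by_cases hxa : x = a
          · rw [hxa, Function.update_self, hga]
          · rw [Function.update_of_ne hxa, Function.update_of_ne hxa]
      · -- left inverse
        intro f hf
        simp only [Finset.mem_filter] at hf
        funext x
        by_cases hxa : x = a
        · rw [hxa, Function.update_self]
        · rw [Function.update_of_ne hxa, ← hf.2, Function.update_of_ne hxa]
      · -- right inverse
        intro c _
        rw [Function.update_self]
    rw [Finset.sum_congr rfl hfiber, Finset.sum_const, smul_eq_mul,
      ih s' hs't hcard', hcard, Finset.prod_range_succ]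
    have h1 : t.card - 1 - k = t.card - (k + 1) := by omega
    rw [h1]

theorem card_GoodSet (s t : Finset α) (hst : s ⊆ t) :
    (GoodSet s t).card = ∏ j ∈ Finset.range s.card, (t.card - 1 - j) :=
  card_GoodSet_aux t s.card s hst rfl

/-! ### Reduction of the injection-counting problem to `card_GoodSet` -/

def liftFun {m n : ℕ} (π : Fin m → Fin n) (I : Finset (Fin m)) : Fin n → Fin n :=
  fun y => if h : (y : ℕ) < m then
    (if (⟨y.1, h⟩ : Fin m) ∈ I then y else π ⟨y.1, h⟩) else y

lemma liftFun_cast {m n : ℕ} (hmn : m ≤ n) (π : Fin m → Fin n) (I : Finset (Fin m))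
    (i : Fin m) :
    liftFun π I (Fin.castLE hmn i) = if i ∈ I then Fin.castLE hmn i else π i := by
  have h : ((Fin.castLE hmn i : Fin n) : ℕ) < m := i.2
  rw [liftFun, dif_pos h]
  have : (⟨(Fin.castLE hmn i : Fin n).1, h⟩ : Fin m) = i := rfl
  rw [this]

lemma liftFun_of_not_lt {m n : ℕ} (π : Fin m → Fin n) (I : Finset (Fin m))
    (y : Fin n) (h : ¬ (y : ℕ) < m) : liftFun π I y = y := dif_neg h

theorem count_injections_with_two_core' (m n : ℕ) (hmn : m ≤ n)
    (I : Finset (Fin m)) (σ : Equiv.Perm (Fin m)) (hσ : ∀ i ∉ I, σ i = i) :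
    Nat.card {π : Fin m ↪ Fin n //
        (InvariantUnder hmn π I ∧ ∀ J, InvariantUnder hmn π J → J ⊆ I) ∧
          ∀ i ∈ I, π i = Fin.castLE hmn (σ i)}
      = ∏ j ∈ Finset.range (m - I.card), (n - I.card - 1 - j) := by
  classical
  set ct : Fin m → Fin n := Fin.castLE hmn with hct
  have hctinj : Function.Injective ct := Fin.castLE_injective hmn
  set s : Finset (Fin n) := (Finset.univ \ I).image ct with hs
  set t : Finset (Fin n) := Finset.univ \ I.image ct with ht
  have hmem_s : ∀ y, y ∈ s ↔ ∃ i, i ∉ I ∧ ct i = y := by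
    intro y; simp [hs, Finset.mem_image, Finset.mem_sdiff]
  have hmem_t : ∀ y, y ∈ t ↔ y ∉ I.image ct := by
    intro y; simp [ht]
  have hst : s ⊆ t := by
    intro y hy
    obtain ⟨i, hiI, rfl⟩ := (hmem_s y).mp hy
    rw [hmem_t]
    intro hc
    obtain ⟨j, hjI, hj⟩ := Finset.mem_image.mp hc
    exact hiI ((hctinj hj) ▸ hjI)
  have hscard : s.card = m - I.card := by
    rw [hs, Finset.card_image_of_injective _ hctinj, Finset.card_sdiff_of_subset (Finset.subset_univ I),
      Finset.card_univ, Fintype.card_fin]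
  have htcard : t.card = n - I.card := by
    rw [ht, Finset.card_sdiff_of_subset (Finset.subset_univ _), Finset.card_univ, Fintype.card_fin,
      Finset.card_image_of_injective _ hctinj]
  have hσI : ∀ i ∈ I, σ i ∈ I := by
    intro i hi
    by_contra hc
    have := hσ (σ i) hc
    have : σ i = i := σ.injective this
    exact hc (this.symm ▸ hi)
  have hσimage : I.image σ = I := by
    apply Finset.eq_of_subset_of_card_le
    · intro y hy
      obtain ⟨i, hi, rfl⟩ := Finset.mem_image.mp hy
      exact hσI i hi
    · rw [Finset.card_image_of_injective _ σ.injective]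
  -- the equivalence with Good functions
  have key : ∀ (π : Fin m ↪ Fin n),
      ((InvariantUnder hmn π I ∧ ∀ J, InvariantUnder hmn π J → J ⊆ I) ∧
        ∀ i ∈ I, π i = ct (σ i)) → Good s t (liftFun π I) := by
    intro π ⟨⟨hinv, hmax⟩, hfix⟩
    have hπI : ∀ i ∈ I, π i ∈ I.image ct := by
      intro i hi
      rw [hfix i hi]
      exact Finset.mem_image_of_mem ct (hσI i hi)
    have hπnI : ∀ i, i ∉ I → π i ∉ I.image ct := by
      intro i hi hc
      obtain ⟨j, hjI, hj⟩ := Finset.mem_image.mp hc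
      obtain ⟨i', hi'I, hσi'⟩ : ∃ i' ∈ I, σ i' = j := by
        have : j ∈ I.image σ := hσimage.symm ▸ hjI
        obtain ⟨i', h1, h2⟩ := Finset.mem_image.mp this
        exact ⟨i', h1, h2⟩
      have : π i' = π i := by rw [hfix i' hi'I, hσi', hj]
      exact hi (π.injective this ▸ hi'I)
    refine ⟨?_, ?_, ?_, ?_⟩
    · -- identity off s
      intro y hy
      by_cases h : (y : ℕ) < m
      · have : (⟨y.1, h⟩ : Fin m) ∈ I := by
          by_contra hc
          exact hy ((hmem_s y).mpr ⟨⟨y.1, h⟩, hc, rfl⟩)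
        rw [liftFun, dif_pos h, if_pos this]
      · exact liftFun_of_not_lt π I y h
    · -- injective on s
      intro x hx y hy hxy
      obtain ⟨i, hiI, rfl⟩ := (hmem_s x).mp hx
      obtain ⟨j, hjI, rfl⟩ := (hmem_s y).mp hy
      rw [liftFun_cast hmn, if_neg hiI, liftFun_cast hmn, if_neg hjI] at hxy
      exact congrArg ct (π.injective hxy)
    · -- maps into t
      intro x hx
      obtain ⟨i, hiI, rfl⟩ := (hmem_s x).mp hx
      rw [liftFun_cast hmn, if_neg hiI, hmem_t]
      exact hπnI i hiI
    · -- acyclic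
      intro J' hJ' hJ'inv
      set J : Finset (Fin m) := Finset.univ.filter (fun i => i ∉ I ∧ ct i ∈ J') with hJ
      have hJct : J.image ct = J' := by
        apply Finset.Subset.antisymm
        · intro y hy
          obtain ⟨i, hi, rfl⟩ := Finset.mem_image.mp hy
          exact ((Finset.mem_filter.mp hi).2).2
        · intro y hy
          obtain ⟨i, hiI, rfl⟩ := (hmem_s y).mp (hJ' hy)
          exact Finset.mem_image_of_mem ct
            (Finset.mem_filter.mpr ⟨Finset.mem_univ i, hiI, hy⟩)
      have hJI : ∀ i ∈ J, i ∉ I := fun i hi => (Finset.mem_filter.mp hi).2.1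
      have hJπ : J.image (fun i => π i) = J.image ct := by
        have : J'.image (liftFun π I) = J.image (fun i => π i) := by
          rw [← hJct, Finset.image_image]
          apply Finset.image_congr
          intro i hi
          simp only [Function.comp]
          rw [liftFun_cast hmn, if_neg (hJI i hi)]
        rw [← this, hJ'inv, ← hJct]
      have : J ⊆ I := hmax J hJπ
      have hJempty : J = ∅ := by
        rw [Finset.eq_empty_iff_forall_notMem]
        intro i hi
        exact hJI i hi (this hi)
      rw [← hJct, hJempty, Finset.image_empty]
  -- the backward construction
  set π₀ : (Fin n → Fin n) → Fin m → Fin n :=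
    fun f i => if i ∈ I then ct (σ i) else f (ct i) with hπ₀
  have hback_inj : ∀ f, Good s t f → Function.Injective (π₀ f) := by
    intro f ⟨h1, h2, h3, h4⟩ i j hij
    have hval : ∀ k, k ∉ I → f (ct k) ∈ t := by
      intro k hk
      exact h3 (ct k) ((hmem_s _).mpr ⟨k, hk, rfl⟩)
    simp only [hπ₀] at hij
    by_cases hiI : i ∈ I <;> by_cases hjI : j ∈ I
    · rw [if_pos hiI, if_pos hjI] at hij
      exact σ.injective (hctinj hij)
    · exfalso
      rw [if_pos hiI, if_neg hjI] at hij
      exact ((hmem_t _).mp (hval j hjI))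
        (hij ▸ Finset.mem_image_of_mem ct (hσI i hiI))
    · exfalso
      rw [if_neg hiI, if_pos hjI] at hij
      exact ((hmem_t _).mp (hval i hiI))
        (hij.symm ▸ Finset.mem_image_of_mem ct (hσI j hjI))
    · rw [if_neg hiI, if_neg hjI] at hij
      exact hctinj (h2 ((hmem_s _).mpr ⟨i, hiI, rfl⟩) ((hmem_s _).mpr ⟨j, hjI, rfl⟩) hij)
  have hback_P : ∀ f (hf : Good s t f),
      (InvariantUnder hmn ⟨π₀ f, hback_inj f hf⟩ I ∧
        ∀ J, InvariantUnder hmn ⟨π₀ f, hback_inj f hf⟩ J → J ⊆ I) ∧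
        ∀ i ∈ I, (⟨π₀ f, hback_inj f hf⟩ : Fin m ↪ Fin n) i = Fin.castLE hmn (σ i) := by
    intro f hf
    obtain ⟨h1, h2, h3, h4⟩ := hf
    have hfi : ∀ i, i ∉ I → π₀ f i = f (ct i) := fun i hi => if_neg hi
    have hfi' : ∀ i ∈ I, π₀ f i = ct (σ i) := fun i hi => if_pos hi
    refine ⟨⟨?_, ?_⟩, fun i hi => hfi' i hi⟩
    · -- I is invariant
      show I.image (fun i => π₀ f i) = I.image ct
      have : I.image (fun i => π₀ f i) = (I.image σ).image ct := by
        rw [Finset.image_image]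
        exact Finset.image_congr fun i hi => hfi' i hi
      rw [this, hσimage]
    · -- maximality
      intro J hJ
      replace hJ : J.image (fun i => π₀ f i) = J.image ct := hJ
      set K := J \ I with hK
      have hKnI : ∀ i ∈ K, i ∉ I := fun i hi => (Finset.mem_sdiff.mp hi).2
      have hKJ : K ⊆ J := Finset.sdiff_subset
      have hπK : K.image (fun i => π₀ f i) = K.image ct := by
        apply Finset.eq_of_subset_of_card_le
        · intro x hx
          obtain ⟨i, hiK, rfl⟩ := Finset.mem_image.mp hx
          have hiI := hKnI i hiK
          have hxt : π₀ f i ∈ t := by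
            rw [hfi i hiI]
            exact h3 (ct i) ((hmem_s _).mpr ⟨i, hiI, rfl⟩)
          have hxJ : π₀ f i ∈ J.image ct := by
            rw [← hJ]
            exact Finset.mem_image_of_mem _ (hKJ hiK)
          obtain ⟨j, hjJ, hj⟩ := Finset.mem_image.mp hxJ
          have hjI : j ∉ I := by
            intro hc
            exact ((hmem_t _).mp hxt) (hj ▸ Finset.mem_image_of_mem ct hc)
          exact hj ▸ Finset.mem_image_of_mem ct (Finset.mem_sdiff.mpr ⟨hjJ, hjI⟩)
        · rw [Finset.card_image_of_injective _ hctinj,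
            Finset.card_image_of_injective _ (hback_inj f ⟨h1, h2, h3, h4⟩)]
      have hKs : K.image ct ⊆ s := by
        intro x hx
        obtain ⟨i, hiK, rfl⟩ := Finset.mem_image.mp hx
        exact (hmem_s _).mpr ⟨i, hKnI i hiK, rfl⟩
      have hKinv : (K.image ct).image f = K.image ct := by
        rw [Finset.image_image]
        have : K.image (f ∘ ct) = K.image (fun i => π₀ f i) :=
          Finset.image_congr fun i hi => (hfi i (hKnI i hi)).symm
        rw [this, hπK]
      have hKempty : K.image ct = ∅ := h4 _ hKs hKinv
      have : K = ∅ := Finset.image_eq_empty.mp hKempty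
      intro i hi
      by_contra hc
      exact Finset.notMem_empty i (this ▸ Finset.mem_sdiff.mpr ⟨hi, hc⟩)
  -- build the equivalence
  let e : {π : Fin m ↪ Fin n //
      (InvariantUnder hmn π I ∧ ∀ J, InvariantUnder hmn π J → J ⊆ I) ∧
        ∀ i ∈ I, π i = Fin.castLE hmn (σ i)} ≃
      {f : Fin n → Fin n // Good s t f} :=
    { toFun := fun π => ⟨liftFun π.1 I, key π.1 π.2⟩
      invFun := fun f => ⟨⟨π₀ f.1, hback_inj f.1 f.2⟩, hback_P f.1 f.2⟩
      left_inv := by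
        rintro ⟨π, hπ⟩
        apply Subtype.ext
        apply Function.Embedding.ext
        intro i
        show π₀ (liftFun π I) i = π i
        by_cases hiI : i ∈ I
        · rw [hπ₀]
          simp only [if_pos hiI]
          exact (hπ.2 i hiI).symm
        · rw [hπ₀]
          simp only [if_neg hiI]
          rw [liftFun_cast hmn, if_neg hiI]
      right_inv := by
        rintro ⟨f, hf⟩
        apply Subtype.ext
        funext y
        show liftFun (π₀ f) I y = f y
        by_cases h : (y : ℕ) < m
        · set i : Fin m := ⟨y.1, h⟩ with hi
          have hcti : ct i = y := rfl
          by_cases hiI : i ∈ I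
          · rw [liftFun, dif_pos h, if_pos hiI]
            have hys : y ∉ s := by
              rw [hmem_s]
              rintro ⟨i', hi'I, hcti'⟩
              exact hi'I (hctinj (hcti'.trans hcti.symm) ▸ hiI)
            exact (hf.1 y hys).symm
          · rw [liftFun, dif_pos h, if_neg hiI]
            show π₀ f i = f y
            rw [hπ₀]
            simp only [if_neg hiI]
            rw [hcti]
        · rw [liftFun_of_not_lt _ _ y h]
          have hys : y ∉ s := by
            rw [hmem_s]
            rintro ⟨i', _, hcti'⟩
            exact h (hcti' ▸ i'.2)
          exact (hf.1 y hys).symm }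
  rw [Nat.card_congr e]
  have hcardeq : Nat.card {f : Fin n → Fin n // Good s t f} = (GoodSet s t).card := by
    rw [Nat.card_eq_fintype_card, Fintype.card_subtype]
    congr 1
  rw [hcardeq, card_GoodSet s t hst, hscard, htcard]

end Aux

/-- Fix `m ≤ n`, a subset `I ⊆ [m]` and a permutation `σ` of `[m]` supported on `I`.
The number of injections `π : [m] → [n]` whose largest invariant subset (the 2-core
support of the associated bipartite multigraph) is exactly `I` and with `π|_I = σ`
equals `(n-ℓ-1)(n-ℓ-2)⋯(n-m)` where `ℓ = |I|` (the empty product, when `ℓ = m`,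
being `1`). -/
theorem count_injections_with_two_core (m n : ℕ) (hmn : m ≤ n)
    (I : Finset (Fin m)) (σ : Equiv.Perm (Fin m)) (hσ : ∀ i ∉ I, σ i = i) :
    Nat.card {π : Fin m ↪ Fin n //
        (InvariantUnder hmn π I ∧ ∀ J, InvariantUnder hmn π J → J ⊆ I) ∧
          ∀ i ∈ I, π i = Fin.castLE hmn (σ i)}
      = ∏ j ∈ Finset.range (m - I.card), (n - I.card - 1 - j) :=
  count_injections_with_two_core' m n hmn I σ hσ
end
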